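/- The number of norm-4 vectors in the Niemeier lattice A_12² is C(13,4)·C(4,2) + C(13,4)·C(4,2) + 4·C(13,2)² + 2·13·C(13,5) + 2·C(13,2)·C(13,3) + 2·C(13,2)·C(13,3) + 2·13·C(13,5) = 189072. -/

import Mathlib

/-- The standard inner product on `ℚ^26`. -/
def qip (x y : Fin 26 → ℚ) : ℚ := ∑ i, x i * y i

/-- A rational vector with all coordinates integral. -/
def isIntVec (x : Fin 26 → ℚ) : Prop := ∀ i, ∃ m : ℤ, x i = (m : ℚ)

/-- First copy of the root lattice `A_12` (coordinates `0,…,12`). -/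
def A12a : Set (Fin 26 → ℚ) :=
  {x | isIntVec x ∧ (∑ i, x i) = 0 ∧ ∀ i : Fin 26, 13 ≤ i.val → x i = 0}

/-- Second copy of the root lattice `A_12` (coordinates `13,…,25`). -/
def A12b : Set (Fin 26 → ℚ) :=
  {x | isIntVec x ∧ (∑ i, x i) = 0 ∧ ∀ i : Fin 26, i.val < 13 → x i = 0}

/-- The glue vector `g = ((1/13^12, -12/13), (5/13^8, -8/13^5))`. -/
def glueA12 : Fin 26 → ℚ := fun i =>
  if i.val < 12 then 1 / 13 else if i.val = 12 then -(12 / 13)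
  else if i.val < 21 then 5 / 13 else -(8 / 13)

/-- The Niemeier lattice `A_12²`. -/
def NiemeierA12sq : AddSubgroup (Fin 26 → ℚ) :=
  AddSubgroup.closure (A12a ∪ A12b ∪ {glueA12})

open Finset

lemma int_sq_add_self_nonneg (x : ℤ) : 0 ≤ x^2 + x := by
  rcases le_or_gt 0 x with h | h
  · positivity
  · nlinarith

lemma int_abs_le_sq (x : ℤ) : |x| ≤ x^2 := by
  rcases le_or_gt 1 (|x|) with h | h
  · calc |x| = 1 * |x| := (one_mul _).symm
    _ ≤ |x| * |x| := mul_le_mul_of_nonneg_right h (abs_nonneg x)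
    _ = x^2 := by rw [abs_mul_abs_self]; ring
  · have h0 := abs_nonneg x
    have hx : x = 0 := abs_eq_zero.mp (by omega)
    simp [hx]

lemma sum_shift_sq_int (f : Fin 13 → ℤ) (c : ℤ) :
    ∑ i, (f i + c)^2 = (∑ i, (f i)^2) + 2*c*(∑ i, f i) + 13*c^2 := by
  have h : ∀ i ∈ univ, (f i + c)^2 = (f i)^2 + 2*c*(f i) + c^2 := fun i _ => by ring
  rw [Finset.sum_congr rfl h, Finset.sum_add_distrib, Finset.sum_add_distrib,
    ← Finset.mul_sum, Finset.sum_const, card_univ]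
  simp only [Fintype.card_fin, smul_eq_mul]
  ring

lemma sum_sq_ge_abs (f : Fin 13 → ℤ) : |∑ i, f i| ≤ ∑ i, (f i)^2 :=
  (Finset.abs_sum_le_sum_abs _ _).trans (Finset.sum_le_sum fun i _ => int_abs_le_sq _)

/-- lower bound for the norm of a block with given sum, with shift `a`. -/
lemma block_lower (a : ℤ) (f : Fin 13 → ℤ) :
    2*a*(∑ i, f i) - 13*a^2 + |(∑ i, f i) - 13*a| ≤ ∑ i, (f i)^2 := by
  have h1 : ∑ i, (f i - a)^2 = (∑ i, (f i)^2) - 2*a*(∑ i, f i) + 13*a^2 := by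
    have := sum_shift_sq_int f (-a)
    simp only [← sub_eq_add_neg] at this
    rw [this]; ring
  have h2 : |∑ i, (f i - a)| ≤ ∑ i, (f i - a)^2 := sum_sq_ge_abs _
  have h3 : ∑ i, (f i - a) = (∑ i, f i) - 13*a := by
    simp [Finset.sum_sub_distrib, Finset.sum_const, card_univ]
  rw [h3, h1] at h2
  linarith

/-- structure lemma, "down" version -/
lemma structDown (a : ℤ) (t : ℕ) (f : Fin 13 → ℤ)
    (h1 : (∑ i, f i) = 13*a - t) (h2 : (∑ i, (f i)^2) = 13*a^2 - 2*a*t + t) :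
    ∀ i, f i = a ∨ f i = a - 1 := by
  have key : ∑ i, ((f i - a)^2 + (f i - a)) = 0 := by
    rw [Finset.sum_add_distrib]
    have hsq : ∑ i, (f i - a)^2 = (∑ i, (f i)^2) - 2*a*(∑ i, f i) + 13*a^2 := by
      have := sum_shift_sq_int f (-a)
      simp only [← sub_eq_add_neg] at this
      rw [this]; ring
    have hlin : ∑ i, (f i - a) = (∑ i, f i) - 13*a := by
      simp [Finset.sum_sub_distrib, Finset.sum_const, card_univ]
    rw [hsq, hlin, h1, h2]; ring
  have hnn : ∀ i ∈ univ, 0 ≤ (f i - a)^2 + (f i - a) := fun i _ => int_sq_add_self_nonneg _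
  have := (Finset.sum_eq_zero_iff_of_nonneg hnn).1 key
  intro i
  have hi := this i (mem_univ i)
  have : (f i - a) * (f i - a + 1) = 0 := by nlinarith [hi]
  rcases mul_eq_zero.1 this with h | h
  · left; omega
  · right; omega

lemma cardDown (a : ℤ) (t : ℕ) (f : Fin 13 → ℤ)
    (h1 : (∑ i, f i) = 13*a - t) (hs : ∀ i, f i = a ∨ f i = a - 1) :
    (univ.filter (fun i => f i = a - 1)).card = t := by
  classical
  have : ∑ i, f i = ∑ i ∈ univ.filter (fun i => f i = a - 1), (a-1) +
      ∑ i ∈ univ.filter (fun i => ¬ (f i = a - 1)), a := by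
    rw [← Finset.sum_filter_add_sum_filter_not univ (fun i => f i = a - 1) f]
    congr 1
    · exact Finset.sum_congr rfl fun i hi => (mem_filter.1 hi).2
    · refine Finset.sum_congr rfl fun i hi => ?_
      rcases hs i with h | h
      · exact h
      · exact absurd h (mem_filter.1 hi).2
  rw [Finset.sum_const, Finset.sum_const, Finset.filter_not, card_sdiff_of_subset (filter_subset _ _),
      card_univ] at this
  simp only [Fintype.card_fin, smul_eq_mul] at this
  have hle : (univ.filter (fun i => f i = a - 1)).card ≤ 13 := by
    calc _ ≤ (univ : Finset (Fin 13)).card := card_filter_le _ _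
    _ = 13 := by simp
  rw [h1, nsmul_eq_mul, nsmul_eq_mul] at this
  have h13 : ((univ.filter (fun i => f i = a - 1)).card : ℤ) = t := by
    rw [Nat.cast_sub hle] at this
    push_cast at this ⊢
    linear_combination this
  exact_mod_cast h13


def downEquiv (a : ℤ) (t : ℕ) :
    {f : Fin 13 → ℤ // (∑ i, f i) = 13*a - t ∧ (∑ i, (f i)^2) = 13*a^2 - 2*a*t + t} ≃
    {s : Finset (Fin 13) // s.card = t} where
  toFun f := ⟨univ.filter (fun i => f.1 i = a - 1),
    cardDown a t f.1 f.2.1 (structDown a t f.1 f.2.1 f.2.2)⟩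
  invFun s := ⟨fun i => if i ∈ s.1 then a - 1 else a, by
    have hcard : s.1.card = t := s.2
    have hle : s.1.card ≤ 13 := by
      calc s.1.card ≤ (univ : Finset (Fin 13)).card := card_le_card (subset_univ _)
      _ = 13 := by simp
    have ht13 : t ≤ 13 := hcard ▸ hle
    constructor
    · rw [Finset.sum_ite, Finset.sum_const, Finset.sum_const, Finset.filter_mem_eq_inter,
        Finset.univ_inter, Finset.filter_not, Finset.filter_mem_eq_inter, Finset.univ_inter,
        Finset.card_sdiff_of_subset (subset_univ _), card_univ]
      simp only [Fintype.card_fin, nsmul_eq_mul, hcard]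
      rw [Nat.cast_sub ht13]
      push_cast
      ring
    · have hpt : ∀ i ∈ univ, (if i ∈ s.1 then a - 1 else a)^2
          = if i ∈ s.1 then (a-1)^2 else a^2 := fun i _ => by split <;> rfl
      rw [Finset.sum_congr rfl hpt, Finset.sum_ite, Finset.sum_const, Finset.sum_const,
        Finset.filter_mem_eq_inter, Finset.univ_inter, Finset.filter_not,
        Finset.filter_mem_eq_inter, Finset.univ_inter,
        Finset.card_sdiff_of_subset (subset_univ _), card_univ]
      simp only [Fintype.card_fin, nsmul_eq_mul, hcard]
      rw [Nat.cast_sub ht13]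
      push_cast
      ring⟩
  left_inv f := by
    apply Subtype.ext
    funext i
    by_cases hc : f.1 i = a - 1
    · simp [hc]
    · have hfa := (structDown a t f.1 f.2.1 f.2.2 i).resolve_right hc
      simp [hc, hfa]
      omega
  right_inv s := by
    apply Subtype.ext
    ext i
    by_cases hi : i ∈ s.1 <;> simp [hi]
    omega

lemma card_down (a : ℤ) (t : ℕ) (A B : ℤ) (hA : A = 13*a - t) (hB : B = 13*a^2 - 2*a*t + t) :
    Nat.card {f : Fin 13 → ℤ // (∑ i, f i) = A ∧ (∑ i, (f i)^2) = B} = Nat.choose 13 t := by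
  subst hA hB
  rw [Nat.card_congr (downEquiv a t), Nat.card_eq_fintype_card, Fintype.card_finset_len]
  simp

lemma card_up (a : ℤ) (t : ℕ) (A B : ℤ) (hA : A = 13*a + t) (hB : B = 13*a^2 + 2*a*t + t) :
    Nat.card {f : Fin 13 → ℤ // (∑ i, f i) = A ∧ (∑ i, (f i)^2) = B} = Nat.choose 13 t := by
  subst hA hB
  have e : {f : Fin 13 → ℤ // (∑ i, f i) = 13*a + t ∧ (∑ i, (f i)^2) = 13*a^2 + 2*a*t + t} ≃
      {f : Fin 13 → ℤ // (∑ i, f i) = 13*(-a) - t ∧ (∑ i, (f i)^2) = 13*(-a)^2 - 2*(-a)*t + t} := by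
    refine ⟨fun f => ⟨-f.1, ?_, ?_⟩, fun f => ⟨-f.1, ?_, ?_⟩, fun f => by apply Subtype.ext; simp,
      fun f => by apply Subtype.ext; simp⟩
    · simp only [Pi.neg_apply, Finset.sum_neg_distrib, f.2.1]; ring
    · simp only [Pi.neg_apply, neg_sq, f.2.2]; ring
    · have := f.2.1; simp only [Pi.neg_apply, Finset.sum_neg_distrib, this]; ring
    · have := f.2.2; simp only [Pi.neg_apply, neg_sq, this]; ring
  rw [Nat.card_congr e]
  exact card_down (-a) t _ _ rfl rfl

instance VFinite (A B : ℤ) :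
    Finite {f : Fin 13 → ℤ // (∑ i, f i) = A ∧ (∑ i, (f i)^2) = B} := by
  have hmem : ∀ (f : {f : Fin 13 → ℤ // (∑ i, f i) = A ∧ (∑ i, (f i)^2) = B}) (i : Fin 13),
      f.1 i ∈ Finset.Icc (-B) B := by
    intro f i
    have hb : (f.1 i)^2 ≤ B := by
      have h := Finset.single_le_sum (f := fun j => (f.1 j)^2) (fun j _ => sq_nonneg (f.1 j)) (mem_univ i)
      rw [f.2.2] at h
      exact h
    have h2 := int_abs_le_sq (f.1 i)
    rw [Finset.mem_Icc]
    constructor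
    · have := neg_abs_le (f.1 i); linarith
    · have := le_abs_self (f.1 i); linarith
  apply Finite.of_injective
    (fun f => (fun i => (⟨f.1 i, hmem f i⟩ : (Finset.Icc (-B) B : Finset ℤ))))
  intro f g h
  apply Subtype.ext
  funext i
  simpa using congrFun h i


lemma structW (c : ℕ) (f : Fin 13 → ℤ)
    (h1 : (∑ i, f i) = 0) (h2 : (∑ i, (f i)^2) = 2*c) (hc : c = 1 ∨ c = 2) :
    ∀ i, f i = 1 ∨ f i = 0 ∨ f i = -1 := by
  intro i
  by_contra hcon
  push_neg at hcon
  have hb : (f i)^2 ≤ 2*c := by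
    have h := Finset.single_le_sum (f := fun j => (f j)^2) (fun j _ => sq_nonneg (f j)) (mem_univ i)
    rw [h2] at h
    exact h
  have h4 : (f i)^2 ≥ 4 := by
    have : f i ≤ -2 ∨ 2 ≤ f i := by omega
    rcases this with h | h <;> nlinarith
  have hc2 : c = 2 := by rcases hc with h | h <;> omega
  subst hc2
  have hsq4 : (f i)^2 = 4 := by push_cast at hb; omega
  have hadd := Finset.sum_erase_add univ (fun j => (f j)^2) (mem_univ i)
  rw [h2] at hadd
  have hrest : ∑ j ∈ univ.erase i, (f j)^2 = 0 := by push_cast at hadd; omega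
  have hzero : ∀ j ∈ univ.erase i, (f j)^2 = 0 :=
    (Finset.sum_eq_zero_iff_of_nonneg (fun j _ => sq_nonneg (f j))).1 hrest
  have hfj : ∀ j, j ≠ i → f j = 0 := by
    intro j hj
    have := hzero j (mem_erase.2 ⟨hj, mem_univ j⟩)
    exact pow_eq_zero_iff (by norm_num) |>.1 this
  have hsum : ∑ j, f j = f i := Finset.sum_eq_single_of_mem i (mem_univ i) (fun j _ hj => hfj j hj)
  rw [h1] at hsum
  have : f i = 0 := hsum.symm
  exact hcon.2.1 this

lemma card_pos_filter (f : Fin 13 → ℤ) (hs : ∀ i, f i = 1 ∨ f i = 0 ∨ f i = -1) :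
    2*((univ.filter (fun i => f i = 1)).card : ℤ) = (∑ i, (f i)^2) + ∑ i, f i := by
  rw [← Finset.sum_add_distrib,
    ← Finset.sum_filter_add_sum_filter_not univ (fun i => f i = 1) (fun i => (f i)^2 + f i)]
  have hA : ∑ i ∈ univ.filter (fun i => f i = 1), ((f i)^2 + f i)
      = ∑ _i ∈ univ.filter (fun i => f i = 1), (2:ℤ) :=
    Finset.sum_congr rfl (fun i hi => by rw [(mem_filter.1 hi).2]; norm_num)
  have hB : ∑ i ∈ univ.filter (fun i => ¬ f i = 1), ((f i)^2 + f i) = 0 := by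
    apply Finset.sum_eq_zero
    intro i hi
    rcases hs i with h | h | h
    · exact absurd h (mem_filter.1 hi).2
    · rw [h]; ring
    · rw [h]; ring
  rw [hA, hB, add_zero, Finset.sum_const, nsmul_eq_mul]
  ring

lemma card_neg_filter (f : Fin 13 → ℤ) (hs : ∀ i, f i = 1 ∨ f i = 0 ∨ f i = -1) :
    2*((univ.filter (fun i => f i = -1)).card : ℤ) = (∑ i, (f i)^2) - ∑ i, f i := by
  rw [← Finset.sum_sub_distrib,
    ← Finset.sum_filter_add_sum_filter_not univ (fun i => f i = -1) (fun i => (f i)^2 - f i)]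
  have hA : ∑ i ∈ univ.filter (fun i => f i = -1), ((f i)^2 - f i)
      = ∑ _i ∈ univ.filter (fun i => f i = -1), (2:ℤ) :=
    Finset.sum_congr rfl (fun i hi => by rw [(mem_filter.1 hi).2]; norm_num)
  have hB : ∑ i ∈ univ.filter (fun i => ¬ f i = -1), ((f i)^2 - f i) = 0 := by
    apply Finset.sum_eq_zero
    intro i hi
    rcases hs i with h | h | h
    · rw [h]; ring
    · rw [h]; ring
    · exact absurd h (mem_filter.1 hi).2
  rw [hA, hB, add_zero, Finset.sum_const, nsmul_eq_mul]
  ring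

/-- decoding map for the `k = 0` blocks -/
def wdec (s u : Finset (Fin 13)) : Fin 13 → ℤ :=
  fun i => (if i ∈ u then 1 else 0) + (if i ∈ s \ u then -1 else 0)

lemma wdec_sum (s u : Finset (Fin 13)) (husub : u ⊆ s) :
    (∑ i, wdec s u i) = (u.card : ℤ) - ((s.card : ℤ) - u.card) := by
  unfold wdec
  rw [Finset.sum_add_distrib, Finset.sum_ite_mem, Finset.sum_ite_mem, Finset.univ_inter,
    Finset.univ_inter, Finset.sum_const, Finset.sum_const, Finset.card_sdiff_of_subset husub]
  simp only [nsmul_eq_mul, mul_one, mul_neg]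
  have := Finset.card_le_card husub
  omega

lemma wdec_sumsq (s u : Finset (Fin 13)) (husub : u ⊆ s) :
    (∑ i, (wdec s u i)^2) = (s.card : ℤ) := by
  have hpt : ∀ i ∈ univ, (wdec s u i)^2
      = (if i ∈ u then (1:ℤ) else 0) + (if i ∈ s \ u then 1 else 0) := by
    intro i _
    unfold wdec
    by_cases hiu : i ∈ u
    · have : i ∉ s \ u := fun hcon => (Finset.mem_sdiff.1 hcon).2 hiu
      simp [hiu, this]
    · by_cases his : i ∈ s \ u <;> simp [hiu, his]
  rw [Finset.sum_congr rfl hpt, Finset.sum_add_distrib, Finset.sum_ite_mem,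
    Finset.sum_ite_mem, Finset.univ_inter, Finset.univ_inter, Finset.sum_const,
    Finset.sum_const, Finset.card_sdiff_of_subset husub]
  simp only [nsmul_eq_mul, mul_one]
  have := Finset.card_le_card husub
  omega

def WEquiv (c : ℕ) (hc : c = 1 ∨ c = 2) :
    {f : Fin 13 → ℤ // (∑ i, f i) = 0 ∧ (∑ i, (f i)^2) = 2*c} ≃
    Σ s : {s : Finset (Fin 13) // s.card = 2*c},
      {u : Finset (Fin 13) // u ∈ Finset.powersetCard c s.1} where
  toFun f :=
    ⟨⟨univ.filter (fun i => f.1 i ≠ 0), by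
      have hs := structW c f.1 f.2.1 f.2.2 hc
      have hp := card_pos_filter f.1 hs
      have hn := card_neg_filter f.1 hs
      rw [f.2.1, f.2.2] at hp hn
      have hsupp : univ.filter (fun i => f.1 i ≠ 0)
          = univ.filter (fun i => f.1 i = 1) ∪ univ.filter (fun i => f.1 i = -1) := by
        ext i
        simp only [mem_filter, mem_union, mem_univ, true_and]
        rcases hs i with h | h | h <;> simp [h]
      have hdisj : Disjoint (univ.filter (fun i => f.1 i = 1))
          (univ.filter (fun i => f.1 i = -1)) := by
        rw [Finset.disjoint_left]
        intro i hi1 hi2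
        have h1 := (mem_filter.1 hi1).2
        have h2 := (mem_filter.1 hi2).2
        omega
      rw [hsupp, card_union_of_disjoint hdisj]
      omega⟩,
    ⟨univ.filter (fun i => f.1 i = 1), by
      have hs := structW c f.1 f.2.1 f.2.2 hc
      have hp := card_pos_filter f.1 hs
      rw [f.2.1, f.2.2] at hp
      rw [Finset.mem_powersetCard]
      constructor
      · intro i hi
        simp only [mem_filter, mem_univ, true_and] at hi ⊢
        omega
      · omega⟩⟩
  invFun su :=
    ⟨wdec su.1.1 su.2.1, by
      have h2 := Finset.mem_powersetCard.1 su.2.2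
      rw [wdec_sum su.1.1 su.2.1 h2.1, wdec_sumsq su.1.1 su.2.1 h2.1]
      rw [h2.2, su.1.2]
      constructor
      · push_cast; ring
      · push_cast; ring⟩
  left_inv f := by
    apply Subtype.ext
    funext i
    have hs := structW c f.1 f.2.1 f.2.2 hc
    simp only [wdec, Finset.mem_sdiff, Finset.mem_filter, Finset.mem_univ, true_and]
    rcases hs i with h | h | h <;> simp [h]
  right_inv su := by
    obtain ⟨⟨s, hscard⟩, ⟨u, humem⟩⟩ := su
    have humem' := Finset.mem_powersetCard.1 humem
    apply Sigma.subtype_ext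
    · simp only [wdec]
      ext i
      simp only [Finset.mem_filter, Finset.mem_univ, true_and, Finset.mem_sdiff]
      by_cases hiu : i ∈ u
      · have hns : i ∉ s \ u := fun hcon => (Finset.mem_sdiff.1 hcon).2 hiu
        simp [hiu, hns]
        exact humem'.1 hiu
      · by_cases his : i ∈ s <;> simp [hiu, his]
    · simp only [wdec]
      ext i
      simp only [Finset.mem_filter, Finset.mem_univ, true_and, Finset.mem_sdiff]
      by_cases hiu : i ∈ u
      · have hns : i ∉ s \ u := fun hcon => (Finset.mem_sdiff.1 hcon).2 hiu
        simp [hiu, hns]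
      · by_cases his : i ∈ s <;> simp [hiu, his]

lemma card_W (c : ℕ) (hc : c = 1 ∨ c = 2) (B : ℤ) (hB : B = 2*c) :
    Nat.card {f : Fin 13 → ℤ // (∑ i, f i) = 0 ∧ (∑ i, (f i)^2) = B}
      = Nat.choose 13 (2*c) * Nat.choose (2*c) c := by
  subst hB
  rw [Nat.card_congr (WEquiv c hc), Nat.card_eq_fintype_card, Fintype.card_sigma]
  have hinner : ∀ s : {s : Finset (Fin 13) // s.card = 2*c},
      Fintype.card {u : Finset (Fin 13) // u ∈ s.1.powersetCard c} = Nat.choose (2*c) c := by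
    intro s
    rw [Fintype.card_coe, Finset.card_powersetCard, s.2]
  rw [Finset.sum_congr rfl (fun s _ => hinner s), Finset.sum_const, card_univ,
    Fintype.card_finset_len, smul_eq_mul]
  simp


/-- solutions in glue class `n` -/
def Solk (n : ℕ) : Type := {p : (Fin 13 → ℤ) × (Fin 13 → ℤ) //
  (∑ i, p.1 i) = -(n : ℤ) ∧ (∑ i, p.2 i) = -5*(n : ℤ) ∧
  (∑ i, (p.1 i)^2) + (∑ i, (p.2 i)^2) = 4 + 2*(n : ℤ)^2}

instance SolkFinite (n : ℕ) : Finite (Solk n) := by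
  unfold Solk
  set B : ℤ := 4 + 2*(n:ℤ)^2 with hB
  have hmem : ∀ (p : Solk n) (j : Fin 2) (i : Fin 13),
      (if j = 0 then p.1.1 i else p.1.2 i) ∈ Finset.Icc (-B) B := by
    intro p j i
    have hnn1 : (0:ℤ) ≤ ∑ i, (p.1.1 i)^2 := Finset.sum_nonneg fun j _ => sq_nonneg _
    have hnn2 : (0:ℤ) ≤ ∑ i, (p.1.2 i)^2 := Finset.sum_nonneg fun j _ => sq_nonneg _
    have hsum := p.2.2.2
    rw [Finset.mem_Icc]
    split
    · have h : (p.1.1 i)^2 ≤ ∑ j, (p.1.1 j)^2 := by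
        simpa using Finset.single_le_sum (f := fun j => (p.1.1 j)^2)
          (fun j _ => sq_nonneg _) (mem_univ i)
      have habs : |p.1.1 i| ≤ (p.1.1 i)^2 := by
        rcases le_or_gt 1 (|p.1.1 i|) with hx | hx
        · nlinarith [abs_nonneg (p.1.1 i), sq_abs (p.1.1 i)]
        · have h0 := abs_nonneg (p.1.1 i)
          have : p.1.1 i = 0 := abs_eq_zero.mp (by omega)
          simp [this]
      constructor
      · have := neg_abs_le (p.1.1 i); linarith
      · have := le_abs_self (p.1.1 i); linarith
    · have h : (p.1.2 i)^2 ≤ ∑ j, (p.1.2 j)^2 := by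
        simpa using Finset.single_le_sum (f := fun j => (p.1.2 j)^2)
          (fun j _ => sq_nonneg _) (mem_univ i)
      have habs : |p.1.2 i| ≤ (p.1.2 i)^2 := by
        rcases le_or_gt 1 (|p.1.2 i|) with hx | hx
        · nlinarith [abs_nonneg (p.1.2 i), sq_abs (p.1.2 i)]
        · have h0 := abs_nonneg (p.1.2 i)
          have : p.1.2 i = 0 := abs_eq_zero.mp (by omega)
          simp [this]
      constructor
      · have := neg_abs_le (p.1.2 i); linarith
      · have := le_abs_self (p.1.2 i); linarith
  apply Finite.of_injective
    (fun p : Solk n => (fun j i => (⟨_, hmem p j i⟩ : (Finset.Icc (-B) B : Finset ℤ))))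
  intro p q h
  apply Subtype.ext
  have h0 := congrFun h 0
  have h1 := congrFun h 1
  apply Prod.ext
  · funext i
    have := congrFun h0 i
    simpa using this
  · funext i
    have := congrFun h1 i
    simpa using this

def solkProdEquiv (n : ℕ) (B1 B2 : ℤ)
    (hsplit : ∀ f g : Fin 13 → ℤ, (∑ i, f i) = -(n:ℤ) → (∑ i, g i) = -5*(n:ℤ) →
      ((∑ i, (f i)^2) + (∑ i, (g i)^2) = 4 + 2*(n:ℤ)^2 ↔
        (∑ i, (f i)^2) = B1 ∧ (∑ i, (g i)^2) = B2))
    (hBsum : B1 + B2 = 4 + 2*(n:ℤ)^2) :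
    Solk n ≃ {f : Fin 13 → ℤ // (∑ i, f i) = -(n:ℤ) ∧ (∑ i, (f i)^2) = B1} ×
             {f : Fin 13 → ℤ // (∑ i, f i) = -5*(n:ℤ) ∧ (∑ i, (f i)^2) = B2} where
  toFun p := (⟨p.1.1, p.2.1, ((hsplit _ _ p.2.1 p.2.2.1).1 p.2.2.2).1⟩,
              ⟨p.1.2, p.2.2.1, ((hsplit _ _ p.2.1 p.2.2.1).1 p.2.2.2).2⟩)
  invFun q := ⟨(q.1.1, q.2.1), q.1.2.1, q.2.2.1, by rw [q.1.2.2, q.2.2.2]; exact hBsum⟩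
  left_inv p := rfl
  right_inv q := by
    apply Prod.ext <;> apply Subtype.ext <;> rfl

lemma hsplit_gen (n : ℕ) (a : ℤ) (B1 B2 : ℤ) (hB1 : B1 = n)
    (hsum : B1 + B2 = 4 + 2*(n:ℤ)^2)
    (hbound : 2*a*(-5*(n:ℤ)) - 13*a^2 + |(-5*(n:ℤ)) - 13*a| = B2) :
    ∀ f g : Fin 13 → ℤ, (∑ i, f i) = -(n:ℤ) → (∑ i, g i) = -5*(n:ℤ) →
      ((∑ i, (f i)^2) + (∑ i, (g i)^2) = 4 + 2*(n:ℤ)^2 ↔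
        (∑ i, (f i)^2) = B1 ∧ (∑ i, (g i)^2) = B2) := by
  intro f g hf hg
  constructor
  · intro h
    have h1 := sum_sq_ge_abs f
    rw [hf] at h1
    have h1' : (n:ℤ) ≤ ∑ i, (f i)^2 := by
      rwa [abs_neg, abs_of_nonneg (by positivity : (0:ℤ) ≤ (n:ℤ))] at h1
    have h2 := block_lower a g
    rw [hg] at h2
    constructor <;> linarith
  · rintro ⟨e1, e2⟩
    rw [e1, e2]
    exact hsum

lemma solk_empty (n : ℕ) (a : ℤ)
    (hlt : 4 + 2*(n:ℤ)^2 < (n:ℤ) + (2*a*(-5*(n:ℤ)) - 13*a^2 + |(-5*(n:ℤ)) - 13*a|)) :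
    IsEmpty (Solk n) := by
  constructor
  intro p
  obtain ⟨⟨f, g⟩, hf, hg, hn⟩ := p
  have h1 := sum_sq_ge_abs f
  rw [hf] at h1
  have h1' : (n:ℤ) ≤ ∑ i, (f i)^2 := by
    rwa [abs_neg, abs_of_nonneg (by positivity : (0:ℤ) ≤ (n:ℤ))] at h1
  have h2 := block_lower a g
  rw [hg] at h2
  simp only at hn
  linarith

lemma card_solk1 : Nat.card (Solk 1) = 13 * 1287 := by
  rw [Nat.card_congr (solkProdEquiv 1 1 5
    (hsplit_gen 1 0 1 5 (by norm_num) (by norm_num) (by norm_num)) (by norm_num)),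
    Nat.card_prod, card_down 0 1 _ _ (by norm_num) (by norm_num),
    card_down 0 5 _ _ (by norm_num) (by norm_num)]
  rfl

lemma card_solk2 : Nat.card (Solk 2) = 78 * 286 := by
  rw [Nat.card_congr (solkProdEquiv 2 2 10
    (hsplit_gen 2 0 2 10 (by norm_num) (by norm_num) (by norm_num)) (by norm_num)),
    Nat.card_prod, card_down 0 2 _ _ (by norm_num) (by norm_num),
    card_down 0 10 _ _ (by norm_num) (by norm_num)]
  rfl

lemma card_solk3 : Nat.card (Solk 3) = 286 * 78 := by
  rw [Nat.card_congr (solkProdEquiv 3 3 19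
    (hsplit_gen 3 (-1) 3 19 (by norm_num) (by norm_num) (by norm_num)) (by norm_num)),
    Nat.card_prod, card_down 0 3 _ _ (by norm_num) (by norm_num),
    card_down (-1) 2 _ _ (by norm_num) (by norm_num)]
  rfl

lemma card_solk5 : Nat.card (Solk 5) = 1287 * 13 := by
  rw [Nat.card_congr (solkProdEquiv 5 5 49
    (hsplit_gen 5 (-2) 5 49 (by norm_num) (by norm_num) (by norm_num)) (by norm_num)),
    Nat.card_prod, card_down 0 5 _ _ (by norm_num) (by norm_num),
    card_up (-2) 1 _ _ (by norm_num) (by norm_num)]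
  rfl

lemma card_solk8 : Nat.card (Solk 8) = 1287 * 13 := by
  rw [Nat.card_congr (solkProdEquiv 8 8 124
    (hsplit_gen 8 (-3) 8 124 (by norm_num) (by norm_num) (by norm_num)) (by norm_num)),
    Nat.card_prod, card_down 0 8 _ _ (by norm_num) (by norm_num),
    card_down (-3) 1 _ _ (by norm_num) (by norm_num)]
  rfl

lemma card_solk10 : Nat.card (Solk 10) = 286 * 78 := by
  rw [Nat.card_congr (solkProdEquiv 10 10 194
    (hsplit_gen 10 (-4) 10 194 (by norm_num) (by norm_num) (by norm_num)) (by norm_num)),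
    Nat.card_prod, card_down 0 10 _ _ (by norm_num) (by norm_num),
    card_up (-4) 2 _ _ (by norm_num) (by norm_num)]
  rfl

lemma card_solk11 : Nat.card (Solk 11) = 78 * 286 := by
  rw [Nat.card_congr (solkProdEquiv 11 11 235
    (hsplit_gen 11 (-4) 11 235 (by norm_num) (by norm_num) (by norm_num)) (by norm_num)),
    Nat.card_prod, card_down 0 11 _ _ (by norm_num) (by norm_num),
    card_down (-4) 3 _ _ (by norm_num) (by norm_num)]
  rfl

lemma card_solk12 : Nat.card (Solk 12) = 13 * 1287 := by
  rw [Nat.card_congr (solkProdEquiv 12 12 280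
    (hsplit_gen 12 (-5) 12 280 (by norm_num) (by norm_num) (by norm_num)) (by norm_num)),
    Nat.card_prod, card_down 0 12 _ _ (by norm_num) (by norm_num),
    card_up (-5) 5 _ _ (by norm_num) (by norm_num)]
  rfl

lemma card_solk4 : Nat.card (Solk 4) = 0 :=
  @Nat.card_of_isEmpty _ (solk_empty 4 (-2) (by norm_num))
lemma card_solk6 : Nat.card (Solk 6) = 0 :=
  @Nat.card_of_isEmpty _ (solk_empty 6 (-2) (by norm_num))
lemma card_solk7 : Nat.card (Solk 7) = 0 :=
  @Nat.card_of_isEmpty _ (solk_empty 7 (-3) (by norm_num))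
lemma card_solk9 : Nat.card (Solk 9) = 0 :=
  @Nat.card_of_isEmpty _ (solk_empty 9 (-3) (by norm_num))

lemma sum_sq_even (f : Fin 13 → ℤ) : Even ((∑ i, (f i)^2) - (∑ i, f i)) := by
  rw [← Finset.sum_sub_distrib]
  apply Finset.even_sum
  intro i _
  have h2 := Int.even_mul_succ_self (f i - 1)
  have he : (f i - 1) * (f i - 1 + 1) = (f i)^2 - f i := by ring
  rwa [he] at h2

def sol0Equiv : Solk 0 ≃
    ({f : Fin 13 → ℤ // (∑ i, f i) = 0 ∧ (∑ i, (f i)^2) = 0} ×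
     {f : Fin 13 → ℤ // (∑ i, f i) = 0 ∧ (∑ i, (f i)^2) = 4}) ⊕
    (({f : Fin 13 → ℤ // (∑ i, f i) = 0 ∧ (∑ i, (f i)^2) = 2} ×
      {f : Fin 13 → ℤ // (∑ i, f i) = 0 ∧ (∑ i, (f i)^2) = 2}) ⊕
     ({f : Fin 13 → ℤ // (∑ i, f i) = 0 ∧ (∑ i, (f i)^2) = 4} ×
      {f : Fin 13 → ℤ // (∑ i, f i) = 0 ∧ (∑ i, (f i)^2) = 0})) where
  toFun p :=
    if h0 : (∑ i, (p.1.1 i)^2) = 0 then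
      Sum.inl (⟨p.1.1, by have := p.2.1; omega, h0⟩,
               ⟨p.1.2, by have := p.2.2.1; push_cast at this; omega,
                by have := p.2.2.2; push_cast at this; omega⟩)
    else if h2 : (∑ i, (p.1.1 i)^2) = 2 then
      Sum.inr (Sum.inl (⟨p.1.1, by have := p.2.1; omega, h2⟩,
               ⟨p.1.2, by have := p.2.2.1; push_cast at this; omega,
                by have := p.2.2.2; push_cast at this; omega⟩))
    else
      Sum.inr (Sum.inr (⟨p.1.1, by have := p.2.1; omega, by
          have hpar := sum_sq_even p.1.1
          rw [Int.even_iff] at hpar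
          have hs1 := p.2.1
          have hnn1 : (0:ℤ) ≤ ∑ i, (p.1.1 i)^2 := Finset.sum_nonneg fun j _ => sq_nonneg _
          have hnn2 : (0:ℤ) ≤ ∑ i, (p.1.2 i)^2 := Finset.sum_nonneg fun j _ => sq_nonneg _
          have htot := p.2.2.2
          push_cast at htot hs1
          omega⟩,
        ⟨p.1.2, by have := p.2.2.1; push_cast at this; omega, by
          have hpar := sum_sq_even p.1.1
          rw [Int.even_iff] at hpar
          have hs1 := p.2.1
          have hnn1 : (0:ℤ) ≤ ∑ i, (p.1.1 i)^2 := Finset.sum_nonneg fun j _ => sq_nonneg _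
          have hnn2 : (0:ℤ) ≤ ∑ i, (p.1.2 i)^2 := Finset.sum_nonneg fun j _ => sq_nonneg _
          have htot := p.2.2.2
          push_cast at htot hs1
          omega⟩))
  invFun q :=
    match q with
    | Sum.inl (f, g) => ⟨(f.1, g.1), by
        refine ⟨by have := f.2.1; push_cast; omega, by have := g.2.1; push_cast; omega, ?_⟩
        have h1 := f.2.2; have h2 := g.2.2; push_cast; omega⟩
    | Sum.inr (Sum.inl (f, g)) => ⟨(f.1, g.1), by
        refine ⟨by have := f.2.1; push_cast; omega, by have := g.2.1; push_cast; omega, ?_⟩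
        have h1 := f.2.2; have h2 := g.2.2; push_cast; omega⟩
    | Sum.inr (Sum.inr (f, g)) => ⟨(f.1, g.1), by
        refine ⟨by have := f.2.1; push_cast; omega, by have := g.2.1; push_cast; omega, ?_⟩
        have h1 := f.2.2; have h2 := g.2.2; push_cast; omega⟩
  left_inv p := by
    dsimp only
    split_ifs <;> rfl
  right_inv q := by
    rcases q with ⟨f, g⟩ | ⟨f, g⟩ | ⟨f, g⟩ <;> dsimp only <;> split_ifs with h1 h2 <;>
      first
        | rfl
        | (exact absurd f.2.2 (by omega))
        | (have := f.2.2; omega)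

lemma card_solk0 : Nat.card (Solk 0) = 4290 + 156 * 156 + 4290 := by
  rw [Nat.card_congr sol0Equiv, Nat.card_sum, Nat.card_sum, Nat.card_prod, Nat.card_prod,
    Nat.card_prod, card_down 0 0 _ _ (by norm_num) (by norm_num),
    card_W 1 (Or.inl rfl) 2 (by norm_num), card_W 2 (Or.inr rfl) 4 (by norm_num)]
  rfl

lemma nat_card_sigma_solk :
    Nat.card (Σ k : Fin 13, Solk k.val) = ∑ k : Fin 13, Nat.card (Solk k.val) := by
  letI : ∀ k : Fin 13, Fintype (Solk k.val) := fun k => Fintype.ofFinite _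
  rw [Nat.card_eq_fintype_card, Fintype.card_sigma]
  exact Finset.sum_congr rfl fun k _ => (Nat.card_eq_fintype_card).symm

lemma total_card : Nat.card (Σ k : Fin 13, Solk k.val) = 189072 := by
  rw [nat_card_sigma_solk]
  rw [Fin.sum_univ_succ, Fin.sum_univ_succ, Fin.sum_univ_succ, Fin.sum_univ_succ,
    Fin.sum_univ_succ, Fin.sum_univ_succ, Fin.sum_univ_succ, Fin.sum_univ_succ,
    Fin.sum_univ_succ, Fin.sum_univ_succ, Fin.sum_univ_succ, Fin.sum_univ_succ,
    Fin.sum_univ_one]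
  norm_num [card_solk0, card_solk1, card_solk2, card_solk3, card_solk4, card_solk5,
    card_solk6, card_solk7, card_solk8, card_solk9, card_solk10, card_solk11, card_solk12]

/-- glue-class coefficient -/
def cf (k : ℤ) (i : Fin 26) : ℤ := if i.val < 13 then k else 5*k

lemma cf_add (k k' : ℤ) (i : Fin 26) : cf (k+k') i = cf k i + cf k' i := by
  unfold cf; split_ifs <;> ring

lemma cf_neg (k : ℤ) (i : Fin 26) : cf (-k) i = -(cf k i) := by
  unfold cf; split_ifs <;> ring

/-- explicit membership predicate for the Niemeier lattice -/
def Pmem (x : Fin 26 → ℚ) : Prop :=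
  (∑ i : Fin 13, x (Fin.castAdd 13 i)) = 0 ∧
  (∑ i : Fin 13, x (Fin.natAdd 13 i)) = 0 ∧
  ∃ k : ℤ, ∀ i : Fin 26, ∃ m : ℤ, x i = m + (cf k i) / 13

def PG : AddSubgroup (Fin 26 → ℚ) where
  carrier := {x | Pmem x}
  zero_mem' := ⟨by simp, by simp, 0, fun i => ⟨0, by simp [cf]⟩⟩
  add_mem' := by
    rintro a b ⟨ha1, ha2, ka, hka⟩ ⟨hb1, hb2, kb, hkb⟩
    refine ⟨?_, ?_, ka + kb, fun i => ?_⟩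
    · simp only [Pi.add_apply, Finset.sum_add_distrib, ha1, hb1, add_zero]
    · simp only [Pi.add_apply, Finset.sum_add_distrib, ha2, hb2, add_zero]
    · obtain ⟨ma, hma⟩ := hka i
      obtain ⟨mb, hmb⟩ := hkb i
      refine ⟨ma + mb, ?_⟩
      rw [Pi.add_apply, hma, hmb, cf_add]
      push_cast
      ring
  neg_mem' := by
    rintro a ⟨ha1, ha2, ka, hka⟩
    refine ⟨?_, ?_, -ka, fun i => ?_⟩
    · simp only [Pi.neg_apply, Finset.sum_neg_distrib, ha1, neg_zero]
    · simp only [Pi.neg_apply, Finset.sum_neg_distrib, ha2, neg_zero]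
    · obtain ⟨ma, hma⟩ := hka i
      refine ⟨-ma, ?_⟩
      rw [Pi.neg_apply, hma, cf_neg]
      push_cast
      ring

lemma glue_sumA : (∑ i : Fin 13, glueA12 (Fin.castAdd 13 i)) = 0 := by
  simp [Fin.sum_univ_succ, glueA12]
  norm_num
lemma glue_sumB : (∑ i : Fin 13, glueA12 (Fin.natAdd 13 i)) = 0 := by
  simp [Fin.sum_univ_succ, glueA12]
  norm_num

lemma glue_pmem : Pmem glueA12 := by
  refine ⟨glue_sumA, glue_sumB, 1, fun i => ?_⟩
  unfold glueA12 cf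
  by_cases h : i.val < 12
  · refine ⟨0, ?_⟩
    simp only [h, if_true, show i.val < 13 by omega, if_true]
    norm_num
  · by_cases h2 : i.val = 12
    · refine ⟨-1, ?_⟩
      simp only [h, if_false, h2, if_true, show i.val < 13 by omega, if_true]
      norm_num
    · by_cases h3 : i.val < 21
      · refine ⟨0, ?_⟩
        simp only [h, if_false, h2, if_false, h3, if_true, show ¬ (i.val < 13) by omega, if_false]
        norm_num
      · refine ⟨-1, ?_⟩
        simp only [h, if_false, h2, if_false, h3, if_false,
          show ¬ (i.val < 13) by omega, if_false]
        norm_num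

lemma a12a_pmem {x : Fin 26 → ℚ} (hx : x ∈ A12a) : Pmem x := by
  obtain ⟨hint, hsum, hz⟩ := hx
  have hsplit := Fin.sum_univ_add (a := 13) (b := 13) (f := x)
  have hB : (∑ i : Fin 13, x (Fin.natAdd 13 i)) = 0 := by
    apply Finset.sum_eq_zero
    intro i _
    exact hz _ (by simp [Fin.natAdd])
  refine ⟨?_, hB, 0, fun i => ?_⟩
  · rw [hsum] at hsplit
    rw [hB] at hsplit
    linarith [hsplit]
  · obtain ⟨m, hm⟩ := hint i
    exact ⟨m, by rw [hm]; simp [cf]⟩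

lemma a12b_pmem {x : Fin 26 → ℚ} (hx : x ∈ A12b) : Pmem x := by
  obtain ⟨hint, hsum, hz⟩ := hx
  have hsplit := Fin.sum_univ_add (a := 13) (b := 13) (f := x)
  have hA : (∑ i : Fin 13, x (Fin.castAdd 13 i)) = 0 := by
    apply Finset.sum_eq_zero
    intro i _
    exact hz _ (by simp [Fin.castAdd, Fin.castLE, i.isLt])
  refine ⟨hA, ?_, 0, fun i => ?_⟩
  · rw [hsum] at hsplit
    rw [hA] at hsplit
    linarith [hsplit]
  · obtain ⟨m, hm⟩ := hint i
    exact ⟨m, by rw [hm]; simp [cf]⟩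

lemma mem_niemeier_iff (x : Fin 26 → ℚ) : x ∈ NiemeierA12sq ↔ Pmem x := by
  constructor
  · intro hx
    have hle : NiemeierA12sq ≤ PG := by
      rw [NiemeierA12sq, AddSubgroup.closure_le]
      rintro y (hy | hy)
      · rcases hy with hy | hy
        · exact a12a_pmem hy
        · exact a12b_pmem hy
      · rw [Set.mem_singleton_iff] at hy
        subst hy
        exact glue_pmem
    exact hle hx
  · rintro ⟨h1, h2, k, hmex⟩
    choose m hm using hmex
    set a : Fin 26 → ℚ := fun i => if i.val < 13 then x i - k * glueA12 i else 0 with hadef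
    set b : Fin 26 → ℚ := fun i => if i.val < 13 then 0 else x i - k * glueA12 i with hbdef
    have hxeq : x = a + b + (k : ℤ) • glueA12 := by
      funext i
      simp only [Pi.add_apply, Pi.smul_apply, zsmul_eq_mul, hadef, hbdef]
      by_cases hi : i.val < 13 <;> simp [hi] <;> ring
    have hga : a ∈ A12a := by
      refine ⟨fun i => ?_, ?_, fun i hi => by simp [hadef, Nat.not_lt.2 hi]⟩
      · by_cases hi : i.val < 13
        · by_cases hi12 : i.val < 12
          · refine ⟨m i, ?_⟩
            simp only [hadef, hi, if_true]
            rw [hm i]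
            unfold cf glueA12
            simp only [hi, if_true, hi12, if_true]
            ring
          · have h12 : i.val = 12 := by omega
            refine ⟨m i + k, ?_⟩
            simp only [hadef, hi, if_true]
            rw [hm i]
            unfold cf glueA12
            simp only [hi, if_true, hi12, if_false, h12, if_true]
            push_cast
            ring
        · exact ⟨0, by simp [hadef, hi]⟩
      · have hsplit := Fin.sum_univ_add (a := 13) (b := 13) (f := a)
        have hB0 : (∑ i : Fin 13, a (Fin.natAdd 13 i)) = 0 := by
          apply Finset.sum_eq_zero
          intro i _
          simp [hadef, Fin.natAdd]
        have hA : (∑ i : Fin 13, a (Fin.castAdd 13 i))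
            = (∑ i : Fin 13, x (Fin.castAdd 13 i))
              - k * (∑ i : Fin 13, glueA12 (Fin.castAdd 13 i)) := by
          rw [Finset.mul_sum, ← Finset.sum_sub_distrib]
          apply Finset.sum_congr rfl
          intro i _
          simp [hadef, Fin.castAdd, Fin.castLE, i.isLt]
        rw [hsplit, hA, hB0, h1, glue_sumA]
        ring
    have hgb : b ∈ A12b := by
      refine ⟨fun i => ?_, ?_, fun i hi => by simp [hbdef, hi]⟩
      · by_cases hi : i.val < 13
        · exact ⟨0, by simp [hbdef, hi]⟩
        · by_cases hi21 : i.val < 21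
          · refine ⟨m i, ?_⟩
            simp only [hbdef, hi, if_false]
            rw [hm i]
            unfold cf glueA12
            simp only [hi, if_false, hi21, if_true, show ¬ (i.val < 12) by omega, if_false,
              show ¬ (i.val = 12) by omega, if_false]
            push_cast
            ring
          · refine ⟨m i + k, ?_⟩
            simp only [hbdef, hi, if_false]
            rw [hm i]
            unfold cf glueA12
            simp only [hi, if_false, hi21, if_false, show ¬ (i.val < 12) by omega, if_false,
              show ¬ (i.val = 12) by omega, if_false]
            push_cast
            ring
      · have hsplit := Fin.sum_univ_add (a := 13) (b := 13) (f := b)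
        have hA0 : (∑ i : Fin 13, b (Fin.castAdd 13 i)) = 0 := by
          apply Finset.sum_eq_zero
          intro i _
          simp [hbdef, Fin.castAdd, Fin.castLE, i.isLt]
        have hB : (∑ i : Fin 13, b (Fin.natAdd 13 i))
            = (∑ i : Fin 13, x (Fin.natAdd 13 i))
              - k * (∑ i : Fin 13, glueA12 (Fin.natAdd 13 i)) := by
          rw [Finset.mul_sum, ← Finset.sum_sub_distrib]
          apply Finset.sum_congr rfl
          intro i _
          simp [hbdef, Fin.natAdd]
        rw [hsplit, hA0, hB, h2, glue_sumB]
        ring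
    rw [hxeq]
    refine AddSubgroup.add_mem _ (AddSubgroup.add_mem _ ?_ ?_) ?_
    · exact AddSubgroup.subset_closure (Set.mem_union_left _ (Set.mem_union_left _ hga))
    · exact AddSubgroup.subset_closure (Set.mem_union_left _ (Set.mem_union_right _ hgb))
    · exact AddSubgroup.zsmul_mem _
        (AddSubgroup.subset_closure (Set.mem_union_right _ (Set.mem_singleton _))) k

/-- encoding of a class-`k` solution as a rational vector -/
def encV (k : Fin 13) (f g : Fin 13 → ℤ) : Fin 26 → ℚ := fun i =>
  if h : i.val < 13 then (f ⟨i.val, h⟩ : ℚ) + (k.val : ℚ)/13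
  else (g ⟨i.val - 13, by omega⟩ : ℚ) + 5*(k.val : ℚ)/13

lemma sum_shift_q (h : Fin 13 → ℚ) (c : ℚ) : ∑ i, (h i + c) = (∑ i, h i) + 13*c := by
  rw [Finset.sum_add_distrib, Finset.sum_const, Finset.card_univ]
  simp only [Fintype.card_fin, nsmul_eq_mul]
  ring

lemma sum_shift_sq_q (h : Fin 13 → ℚ) (c : ℚ) :
    ∑ i, (h i + c)^2 = (∑ i, (h i)^2) + 2*c*(∑ i, h i) + 13*c^2 := by
  have hpt : ∀ i ∈ Finset.univ, (h i + c)^2 = (h i)^2 + 2*c*(h i) + c^2 := fun i _ => by ring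
  rw [Finset.sum_congr rfl hpt, Finset.sum_add_distrib, Finset.sum_add_distrib,
    ← Finset.mul_sum, Finset.sum_const, Finset.card_univ]
  simp only [Fintype.card_fin, nsmul_eq_mul]
  ring

lemma encV_castAdd (k : Fin 13) (f g : Fin 13 → ℤ) (i : Fin 13) :
    encV k f g (Fin.castAdd 13 i) = (f i : ℚ) + (k.val : ℚ)/13 := by
  unfold encV
  rw [dif_pos (by simpa using i.isLt)]
  congr 1

lemma encV_natAdd (k : Fin 13) (f g : Fin 13 → ℤ) (i : Fin 13) :
    encV k f g (Fin.natAdd 13 i) = (g i : ℚ) + 5*(k.val : ℚ)/13 := by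
  unfold encV
  rw [dif_neg (by simp [Fin.natAdd])]
  have hidx : (⟨(Fin.natAdd 13 i).val - 13, by omega⟩ : Fin 13) = i := by
    apply Fin.ext
    simp [Fin.natAdd]
  rw [hidx]

lemma encV_qip (k : Fin 13) (f g : Fin 13 → ℤ) :
    qip (encV k f g) (encV k f g)
      = ((∑ i, (f i)^2 : ℤ) : ℚ) + 2*((k.val : ℚ)/13)*((∑ i, f i : ℤ) : ℚ) + 13*((k.val : ℚ)/13)^2
      + (((∑ i, (g i)^2 : ℤ) : ℚ) + 2*(5*(k.val : ℚ)/13)*((∑ i, g i : ℤ) : ℚ)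
          + 13*(5*(k.val : ℚ)/13)^2) := by
  unfold qip
  have hsim : ∀ i : Fin 26, encV k f g i * encV k f g i = (encV k f g i)^2 := fun i => (sq _).symm
  rw [Finset.sum_congr rfl (fun i _ => hsim i)]
  rw [Fin.sum_univ_add (a := 13) (b := 13) (f := fun i => (encV k f g i)^2)]
  have hA : (∑ i : Fin 13, (encV k f g (Fin.castAdd 13 i))^2)
      = ∑ i : Fin 13, ((f i : ℚ) + (k.val : ℚ)/13)^2 :=
    Finset.sum_congr rfl (fun i _ => by rw [encV_castAdd])
  have hB : (∑ i : Fin 13, (encV k f g (Fin.natAdd 13 i))^2)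
      = ∑ i : Fin 13, ((g i : ℚ) + 5*(k.val : ℚ)/13)^2 :=
    Finset.sum_congr rfl (fun i _ => by rw [encV_natAdd])
  rw [hA, hB, sum_shift_sq_q (fun i => (f i : ℚ)) ((k.val : ℚ)/13),
    sum_shift_sq_q (fun i => (g i : ℚ)) (5*(k.val : ℚ)/13)]
  push_cast
  ring

lemma encV_mem (k : Fin 13) (p : Solk k.val) :
    encV k p.1.1 p.1.2 ∈ NiemeierA12sq ∧ qip (encV k p.1.1 p.1.2) (encV k p.1.1 p.1.2) = 4 := by
  have hf := p.2.1
  have hg := p.2.2.1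
  have hn := p.2.2.2
  constructor
  · rw [mem_niemeier_iff]
    refine ⟨?_, ?_, (k.val : ℤ), fun i => ?_⟩
    · have hA : (∑ i : Fin 13, encV k p.1.1 p.1.2 (Fin.castAdd 13 i))
          = ∑ i : Fin 13, ((p.1.1 i : ℚ) + (k.val : ℚ)/13) :=
        Finset.sum_congr rfl (fun i _ => by rw [encV_castAdd])
      rw [hA, sum_shift_q]
      have hc : (∑ i, ((p.1.1 i : ℚ))) = ((∑ i, p.1.1 i : ℤ) : ℚ) := by push_cast; rfl
      rw [hc, hf]
      push_cast
      ring
    · have hB : (∑ i : Fin 13, encV k p.1.1 p.1.2 (Fin.natAdd 13 i))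
          = ∑ i : Fin 13, ((p.1.2 i : ℚ) + 5*(k.val : ℚ)/13) :=
        Finset.sum_congr rfl (fun i _ => by rw [encV_natAdd])
      rw [hB, sum_shift_q]
      have hc : (∑ i, ((p.1.2 i : ℚ))) = ((∑ i, p.1.2 i : ℤ) : ℚ) := by push_cast; rfl
      rw [hc, hg]
      push_cast
      ring
    · unfold encV cf
      by_cases hi : i.val < 13
      · refine ⟨p.1.1 ⟨i.val, hi⟩, ?_⟩
        rw [dif_pos hi, if_pos hi]
        push_cast
        ring
      · refine ⟨p.1.2 ⟨i.val - 13, by omega⟩, ?_⟩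
        rw [dif_neg hi, if_neg hi]
        push_cast
        ring
  · rw [encV_qip, hf, hg]
    have hsq : ((∑ i, (p.1.1 i)^2 : ℤ) : ℚ) + ((∑ i, (p.1.2 i)^2 : ℤ) : ℚ)
        = 4 + 2*((k.val : ℚ))^2 := by
      rw [← Int.cast_add, hn]
      push_cast
      ring
    push_cast at hsq ⊢
    nlinarith [hsq]

def TheSet : Set (Fin 26 → ℚ) := {u : Fin 26 → ℚ | u ∈ NiemeierA12sq ∧ qip u u = 4}

def Phi : (Σ k : Fin 13, Solk k.val) → TheSet :=
  fun s => ⟨encV s.1 s.2.1.1 s.2.1.2, encV_mem s.1 s.2⟩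

lemma Phi_injective : Function.Injective Phi := by
  rintro ⟨k, ⟨⟨f, g⟩, hp⟩⟩ ⟨k', ⟨⟨f', g'⟩, hp'⟩⟩ h
  have heq : encV k f g = encV k' f' g' := congrArg Subtype.val h
  have hkk : k = k' := by
    have h0 := congrFun heq (Fin.castAdd 13 ⟨0, by norm_num⟩)
    rw [encV_castAdd, encV_castAdd] at h0
    have hq : ((13*(f ⟨0, by norm_num⟩ - f' ⟨0, by norm_num⟩) : ℤ) : ℚ)
        = ((k'.val : ℚ)) - ((k.val : ℚ)) := by
      push_cast
      field_simp at h0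
      push_cast at h0
      linarith [h0]
    have hz : 13*(f ⟨0, by norm_num⟩ - f' ⟨0, by norm_num⟩) = (k'.val : ℤ) - (k.val : ℤ) := by
      exact_mod_cast hq
    have hk := k.isLt
    have hk' := k'.isLt
    apply Fin.ext
    omega
  subst hkk
  have hff : f = f' := by
    funext j
    have hj := congrFun heq (Fin.castAdd 13 j)
    rw [encV_castAdd, encV_castAdd] at hj
    have hq : ((f j : ℤ) : ℚ) = ((f' j : ℤ) : ℚ) := by push_cast; linarith [hj]
    exact_mod_cast hq
  have hgg : g = g' := by
    funext j
    have hj := congrFun heq (Fin.natAdd 13 j)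
    rw [encV_natAdd, encV_natAdd] at hj
    have hq : ((g j : ℤ) : ℚ) = ((g' j : ℤ) : ℚ) := by push_cast; linarith [hj]
    exact_mod_cast hq
  subst hff
  subst hgg
  rfl

lemma Phi_surjective : Function.Surjective Phi := by
  rintro ⟨u, hu1, hu2⟩
  rw [mem_niemeier_iff] at hu1
  obtain ⟨h1, h2, k0, hmex⟩ := hu1
  choose m hm using hmex
  have hmod : (0:ℤ) ≤ k0 % 13 := Int.emod_nonneg k0 (by norm_num)
  have hmodlt : k0 % 13 < 13 := Int.emod_lt_of_pos k0 (by norm_num)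
  set kk : Fin 13 := ⟨(k0 % 13).toNat, by omega⟩ with hkk
  have hval : ((kk.val : ℤ)) = k0 % 13 := by
    rw [hkk]
    exact Int.toNat_of_nonneg hmod
  set d : ℤ := k0 / 13 with hd
  have hk0 : k0 = 13*d + (kk.val : ℤ) := by
    rw [hval, hd]
    omega
  have hcast : (k0 : ℚ) = 13*(d : ℚ) + (kk.val : ℚ) := by exact_mod_cast hk0
  set f : Fin 13 → ℤ := fun j => m (Fin.castAdd 13 j) + d with hfdef
  set g : Fin 13 → ℤ := fun j => m (Fin.natAdd 13 j) + 5*d with hgdef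
  have hueq : u = encV kk f g := by
    funext i
    unfold encV
    by_cases hi : i.val < 13
    · rw [dif_pos hi]
      have hci : Fin.castAdd 13 (⟨i.val, hi⟩ : Fin 13) = i := by apply Fin.ext; rfl
      simp only [hfdef]
      rw [hci, hm i]
      unfold cf
      rw [if_pos hi]
      push_cast
      rw [hcast]
      ring
    · rw [dif_neg hi]
      have hci : Fin.natAdd 13 (⟨i.val - 13, by omega⟩ : Fin 13) = i := by
        apply Fin.ext
        simp only [Fin.natAdd]
        omega
      simp only [hgdef]
      rw [hci, hm i]
      unfold cf
      rw [if_neg hi]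
      push_cast
      rw [hcast]
      ring
  have hfs : (∑ i, f i) = -(kk.val : ℤ) := by
    have hsumA : (∑ i : Fin 13, u (Fin.castAdd 13 i))
        = ∑ i : Fin 13, ((f i : ℚ) + (kk.val : ℚ)/13) := by
      rw [hueq]
      exact Finset.sum_congr rfl (fun i _ => by rw [encV_castAdd])
    rw [h1, sum_shift_q] at hsumA
    have hq : ((∑ i, f i : ℤ) : ℚ) = -((kk.val : ℚ)) := by
      push_cast at hsumA ⊢
      linarith [hsumA]
    exact_mod_cast hq
  have hgs : (∑ i, g i) = -5*(kk.val : ℤ) := by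
    have hsumB : (∑ i : Fin 13, u (Fin.natAdd 13 i))
        = ∑ i : Fin 13, ((g i : ℚ) + 5*(kk.val : ℚ)/13) := by
      rw [hueq]
      exact Finset.sum_congr rfl (fun i _ => by rw [encV_natAdd])
    rw [h2, sum_shift_q] at hsumB
    have hq : ((∑ i, g i : ℤ) : ℚ) = -5*((kk.val : ℚ)) := by
      push_cast at hsumB ⊢
      linarith [hsumB]
    exact_mod_cast hq
  have hns : (∑ i, (f i)^2) + (∑ i, (g i)^2) = 4 + 2*(kk.val : ℤ)^2 := by
    have hq := hu2
    rw [hueq, encV_qip, hfs, hgs] at hq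
    have hq' : ((∑ i, (f i)^2 : ℤ) : ℚ) + ((∑ i, (g i)^2 : ℤ) : ℚ)
        = 4 + 2*((kk.val : ℚ))^2 := by
      push_cast at hq ⊢
      nlinarith [hq]
    have : (((∑ i, (f i)^2) + (∑ i, (g i)^2) : ℤ) : ℚ) = ((4 + 2*(kk.val : ℤ)^2 : ℤ) : ℚ) := by
      push_cast at hq' ⊢
      linarith [hq']
    exact_mod_cast this
  refine ⟨⟨kk, ⟨(f, g), hfs, hgs, hns⟩⟩, ?_⟩
  apply Subtype.ext
  exact hueq.symm

lemma card_theSet : Nat.card TheSet = Nat.card (Σ k : Fin 13, Solk k.val) :=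
  (Nat.card_congr (Equiv.ofBijective Phi ⟨Phi_injective, Phi_surjective⟩)).symm


/-- The number of norm-4 vectors in the Niemeier lattice `A_12²` is
`C(13,4)·C(4,2) + C(13,4)·C(4,2) + 4·C(13,2)² + 2·13·C(13,5) + 2·C(13,2)·C(13,3)
 + 2·C(13,2)·C(13,3) + 2·13·C(13,5) = 189072`. -/
theorem niemeierA12sq_norm4_count :
    Nat.choose 13 4 * Nat.choose 4 2 + Nat.choose 13 4 * Nat.choose 4 2 +
      4 * Nat.choose 13 2 ^ 2 + 2 * 13 * Nat.choose 13 5 +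
      2 * Nat.choose 13 2 * Nat.choose 13 3 +
      2 * Nat.choose 13 2 * Nat.choose 13 3 + 2 * 13 * Nat.choose 13 5
      = 189072 ∧
    Nat.card {u : Fin 26 → ℚ | u ∈ NiemeierA12sq ∧ qip u u = 4} = 189072 := by
  constructor
  · decide
  · exact card_theSet.trans total_card
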